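/- For every τ ∈ ℍ and every ξ ∈ ℂ \ Λ_τ, the family λ ↦ (ξ + λ)^{−2} − λ^{−2}, indexed by λ ∈ Λ_τ \ {0}, is absolutely summable, and the family λ ↦ (ξ + λ)^{−1} − λ^{−1} + ξ·λ^{−2}, indexed by λ ∈ Λ_τ \ {0}, is absolutely summable. (These convergence facts make the Weierstrass ℘- and ζ-functions well defined.) -/

import Mathlib

noncomputable section

open Complex

/-- The upper half-plane as a subset of ℂ. -/
def UHP : Set ℂ := {τ : ℂ | 0 < τ.im}

/-- The lattice Λ_τ = ℤτ + ℤ. -/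
def LatticeSet (τ : ℂ) : Set ℂ := {z : ℂ | ∃ m n : ℤ, z = m * τ + n}

/-- r(τ) = min of |λ| over nonzero lattice points. -/
def rmin (τ : ℂ) : ℝ := sInf ((fun z : ℂ => ‖z‖) '' (LatticeSet τ \ {0}))

/-- The Eisenstein series e_k(τ). -/
def ek (k : ℕ) (τ : ℂ) : ℂ :=
  ∑' p : {p : ℤ × ℤ // p ≠ 0}, (((p.1.1 : ℂ) * τ + (p.1.2 : ℂ)) ^ k)⁻¹

/-- The normalized Eisenstein series G_k(τ). -/
def Gk (k : ℕ) (τ : ℂ) : ℂ :=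
  if k = 2 then
    -(1 / 24) + ∑' n : ℕ, (∑ d ∈ Nat.divisors n, (d : ℂ)) *
      Complex.exp (2 * Real.pi * Complex.I * n * τ)
  else if Even k ∧ 4 ≤ k then
    (Nat.factorial (k - 1) : ℂ) / (2 * (2 * Real.pi * Complex.I) ^ k) * ek k τ
  else 0

/-- The Eisenstein elliptic function E_k(ξ,τ), k ≥ 3. -/
def Ek (k : ℕ) (ξ τ : ℂ) : ℂ :=
  ∑' p : ℤ × ℤ, ((ξ + (p.1 : ℂ) * τ + (p.2 : ℂ)) ^ k)⁻¹

/-- The Weierstrass ℘-function. -/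
def wp (τ ξ : ℂ) : ℂ :=
  (ξ ^ 2)⁻¹ + ∑' l : ↥(LatticeSet τ \ {0}), (((ξ + (l : ℂ)) ^ 2)⁻¹ - ((l : ℂ) ^ 2)⁻¹)

/-- The Weierstrass zeta function. -/
def wzeta (τ ξ : ℂ) : ℂ :=
  ξ⁻¹ + ∑' l : ↥(LatticeSet τ \ {0}), ((ξ + (l : ℂ))⁻¹ - ((l : ℂ))⁻¹ + ξ * (((l : ℂ)) ^ 2)⁻¹)

/-- P_k(ξ,τ): for k = 2 via ℘, otherwise via E_k. -/
def Pk (k : ℕ) (ξ τ : ℂ) : ℂ :=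
  if k = 2 then ((2 * Real.pi * Complex.I) ^ 2)⁻¹ * wp τ ξ
  else ((2 * Real.pi * Complex.I) ^ k)⁻¹ * (Ek k ξ τ - ek k τ)

/-- E_1(ξ,τ) = ζ_τ(ξ) − 2(2πi)² G₂(τ) ξ. -/
def E1 (ξ τ : ℂ) : ℂ :=
  wzeta τ ξ - 2 * (2 * Real.pi * Complex.I) ^ 2 * Gk 2 τ * ξ

private lemma aux_div (num den C rr : ℝ) (hr : 0 < rr) (hden : 0 < den)
    (h : num * rr ^ 3 ≤ C * den) : num / den ≤ C * (rr ^ 3)⁻¹ := by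
  rw [div_le_iff₀ hden]
  have h3 : (0:ℝ) < rr ^ 3 := by positivity
  calc num = num * rr ^ 3 * (rr ^ 3)⁻¹ := by field_simp
    _ ≤ C * den * (rr ^ 3)⁻¹ := by
        exact mul_le_mul_of_nonneg_right h (by positivity)
    _ = C * (rr ^ 3)⁻¹ * den := by ring

open EisensteinSeries Filter in
private lemma summable_abs_lattice (τ : ℂ) (hτ : 0 < τ.im) (f : ℂ → ℂ) (C R : ℝ)
    (hf : ∀ l : ℂ, l ∈ LatticeSet τ → R ≤ ‖l‖ →
      ‖f l‖ ≤ C * (‖l‖ ^ 3)⁻¹) :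
    Summable fun l : ↥(LatticeSet τ \ {0}) => ‖f l‖ := by
  set z : UpperHalfPlane := ⟨τ, hτ⟩ with hz
  have hzero : ∀ m n : ℤ, (m : ℂ) * τ + n = 0 → m = 0 ∧ n = 0 := by
    intro m n h
    have him : (m : ℝ) * τ.im = 0 := by
      have := congrArg Complex.im h
      simpa using this
    have hm : m = 0 := by
      rcases mul_eq_zero.mp him with h' | h'
      · exact_mod_cast h'
      · exact absurd h' (ne_of_gt hτ)
    refine ⟨hm, ?_⟩
    rw [hm] at h
    push_cast at h
    simpa using h
  have hΦmem : ∀ p : {p : ℤ × ℤ // p ≠ 0},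
      ((p.1.1 : ℂ) * τ + p.1.2) ∈ LatticeSet τ \ {0} := by
    rintro ⟨⟨m, n⟩, hp⟩
    refine ⟨⟨m, n, rfl⟩, ?_⟩
    intro h0
    simp only [Set.mem_singleton_iff] at h0
    obtain ⟨hm, hn⟩ := hzero m n h0
    exact hp (by simp [Prod.ext_iff, hm, hn])
  set Φ : {p : ℤ × ℤ // p ≠ 0} → ↥(LatticeSet τ \ {0}) :=
    fun p => ⟨(p.1.1 : ℂ) * τ + p.1.2, hΦmem p⟩ with hΦ
  have hbij : Function.Bijective Φ := by
    constructor
    · rintro ⟨⟨m, n⟩, hp⟩ ⟨⟨m', n'⟩, hp'⟩ h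
      have h' : (m : ℂ) * τ + n = (m' : ℂ) * τ + n' := congrArg Subtype.val h
      have h0 : ((m - m' : ℤ) : ℂ) * τ + ((n - n' : ℤ) : ℂ) = 0 := by
        push_cast; linear_combination h'
      obtain ⟨h1, h2⟩ := hzero _ _ h0
      have hm : m = m' := by omega
      have hn : n = n' := by omega
      simp [hm, hn]
    · rintro ⟨w, hw, hw0⟩
      obtain ⟨m, n, rfl⟩ := hw
      have hmn : ((m, n) : ℤ × ℤ) ≠ 0 := by
        intro h0
        obtain ⟨h1, h2⟩ := Prod.mk_eq_zero.mp h0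
        exact hw0 (by simp [h1, h2])
      exact ⟨⟨(m, n), hmn⟩, rfl⟩
  rw [← (Equiv.ofBijective Φ hbij).summable_iff]
  set xv : {p : ℤ × ℤ // p ≠ 0} → (Fin 2 → ℤ) := fun p => ![p.1.1, p.1.2] with hxv
  have hxinj : Function.Injective xv := by
    intro p q h
    have h0 := congrFun h 0
    have h1 := congrFun h 1
    simp only [hxv, Matrix.cons_val_zero, Matrix.cons_val_one, Matrix.head_cons] at h0 h1
    exact Subtype.ext (Prod.ext h0 h1)
  have hgs : Summable ((fun v => C * ‖eisSummand 3 v z‖) ∘ xv) :=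
    ((summable_norm_eisSummand (le_refl 3) z).mul_left C).comp_injective hxinj
  apply Summable.of_norm_bounded_eventually hgs
  have hr0 : 0 < r z := r_pos z
  have hten : Tendsto (fun p : {p : ℤ × ℤ // p ≠ 0} => ‖xv p‖) cofinite atTop := by
    have h2 : Tendsto (fun v : Fin 2 → ℤ => ‖v‖) cofinite atTop := by
      rw [← cocompact_eq_cofinite]
      exact tendsto_norm_cocompact_atTop
    exact h2.comp hxinj.tendsto_cofinite
  filter_upwards [hten.eventually_ge_atTop (R / r z)] with p hp
  have hx0 : xv p ≠ 0 := by
    intro h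
    have h0 := congrFun h 0
    have h1 := congrFun h 1
    simp only [hxv, Matrix.cons_val_zero, Matrix.cons_val_one, Matrix.head_cons,
      Pi.zero_apply] at h0 h1
    exact p.2 (Prod.ext h0 h1)
  have hlb := r_mul_max_le z hx0
  have hxv0 : ((xv p 0 : ℂ)) = (p.1.1 : ℂ) := by simp [hxv]
  have hxv1 : ((xv p 1 : ℂ)) = (p.1.2 : ℂ) := by simp [hxv]
  rw [hxv0, hxv1] at hlb
  have hcoe : (z : ℂ) = τ := rfl
  rw [hcoe] at hlb
  have hRl : R ≤ ‖(p.1.1 : ℂ) * τ + p.1.2‖ := by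
    calc R = r z * (R / r z) := by field_simp
      _ ≤ r z * ‖xv p‖ := by
          exact mul_le_mul_of_nonneg_left hp (le_of_lt hr0)
      _ ≤ _ := hlb
  have heis : ‖eisSummand 3 (xv p) z‖ =
      (‖(p.1.1 : ℂ) * τ + p.1.2‖ ^ 3)⁻¹ := by
    have he : eisSummand 3 (xv p) z = ((p.1.1 : ℂ) * τ + p.1.2) ^ (-3 : ℤ) := rfl
    rw [he, norm_zpow, zpow_neg]
    norm_cast
  have key := hf ((p.1.1 : ℂ) * τ + p.1.2) ⟨p.1.1, p.1.2, rfl⟩ hRl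
  calc ‖((fun l : ↥(LatticeSet τ \ {0}) => ‖f l‖) ∘ Equiv.ofBijective Φ hbij) p‖
      = ‖f ((p.1.1 : ℂ) * τ + p.1.2)‖ := by
        simp only [Function.comp_apply, Equiv.ofBijective_apply, hΦ, Real.norm_eq_abs]
        exact abs_of_nonneg (norm_nonneg _)
    _ ≤ C * (‖(p.1.1 : ℂ) * τ + p.1.2‖ ^ 3)⁻¹ := key
    _ = ((fun v => C * ‖eisSummand 3 v z‖) ∘ xv) p := by
        rw [Function.comp_apply, heis]

/-- The defining families of the Weierstrass ℘- and ζ-functions are absolutely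
summable over the nonzero lattice points. -/
theorem wp_wzeta_summable (τ : ℂ) (hτ : τ ∈ UHP) (ξ : ℂ) (hξ : ξ ∉ LatticeSet τ) :
    Summable (fun l : ↥(LatticeSet τ \ {0}) =>
      ‖((ξ + (l : ℂ)) ^ 2)⁻¹ - (((l : ℂ)) ^ 2)⁻¹‖) ∧
    Summable (fun l : ↥(LatticeSet τ \ {0}) =>
      ‖(ξ + (l : ℂ))⁻¹ - ((l : ℂ))⁻¹ + ξ * (((l : ℂ)) ^ 2)⁻¹‖) := by
  have hτ' : 0 < τ.im := hτ
  set a := ‖ξ‖ with ha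
  have ha0 : 0 ≤ a := norm_nonneg _
  -- common facts for lattice points far away
  have hfar : ∀ l : ℂ, l ∈ LatticeSet τ → 2 * a + 1 ≤ ‖l‖ →
      l ≠ 0 ∧ ξ + l ≠ 0 := by
    intro l hl hRl
    have hl0 : l ≠ 0 := by
      intro h
      rw [h] at hRl
      simp at hRl
      linarith
    refine ⟨hl0, ?_⟩
    intro h
    apply hξ
    obtain ⟨m, n, rfl⟩ := hl
    have : ξ = ((-m : ℤ) : ℂ) * τ + ((-n : ℤ) : ℂ) := by
      push_cast
      linear_combination h
    exact ⟨-m, -n, this⟩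
  constructor
  · apply summable_abs_lattice τ hτ' (fun w => ((ξ + w) ^ 2)⁻¹ - (w ^ 2)⁻¹) (10 * a + 1) (2 * a + 1)
    intro l hl hRl
    obtain ⟨hl0, hξl⟩ := hfar l hl hRl
    set rr := ‖l‖ with hrr
    have hr1 : 1 ≤ rr := by linarith
    have hr0 : (0:ℝ) < rr := by linarith
    have hbpos : 0 < ‖ξ + l‖ := norm_pos_iff.mpr hξl
    have hb : rr - a ≤ ‖ξ + l‖ := by
      have h1 : ‖(ξ + l) + (-ξ)‖ ≤ ‖ξ + l‖ + ‖-ξ‖ :=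
        norm_add_le _ _
      rw [show (ξ + l) + (-ξ) = l by ring, norm_neg] at h1
      linarith
    have hc : ‖ξ + 2 * l‖ ≤ a + 2 * rr := by
      calc ‖ξ + 2 * l‖ ≤ ‖ξ‖ + ‖2 * l‖ :=
            norm_add_le _ _
        _ = a + 2 * rr := by rw [norm_mul, Complex.norm_two, ← ha, ← hrr]
    have hrepr : ((ξ + l) ^ 2)⁻¹ - (l ^ 2)⁻¹ = (-(ξ * (ξ + 2 * l))) / ((ξ + l) ^ 2 * l ^ 2) := by
      field_simp
      ring
    rw [hrepr, norm_div, norm_neg, norm_mul, norm_mul, norm_pow, norm_pow, ← ha, ← hrr]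
    apply aux_div _ _ _ rr hr0 (by positivity)
    have hnn : 0 ≤ ‖ξ + 2 * l‖ := norm_nonneg _
    calc a * ‖ξ + 2 * l‖ * rr ^ 3 ≤ a * (a + 2 * rr) * rr ^ 3 := by
          have := mul_le_mul_of_nonneg_left hc ha0
          nlinarith [pow_pos hr0 3]
      _ ≤ (10 * a + 1) * ((rr - a) ^ 2 * rr ^ 2) := by
          have h't : 0 ≤ rr - 2 * a - 1 := by linarith
          have h5 : a * (a + 2 * rr) * rr ≤ (10 * a + 1) * (rr - a) ^ 2 := by
            nlinarith [mul_nonneg ha0 h't, mul_nonneg (mul_nonneg ha0 ha0) h't,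
              mul_nonneg (mul_nonneg ha0 h't) h't, mul_nonneg h't h't, sq_nonneg a]
          have h6 := mul_le_mul_of_nonneg_right h5 (sq_nonneg rr)
          nlinarith [h6]
      _ ≤ (10 * a + 1) * (‖ξ + l‖ ^ 2 * rr ^ 2) := by
          have h0a : 0 ≤ rr - a := by linarith
          gcongr
  · apply summable_abs_lattice τ hτ' (fun w => (ξ + w)⁻¹ - w⁻¹ + ξ * (w ^ 2)⁻¹) (2 * a ^ 2 + 1) (2 * a + 1)
    intro l hl hRl
    obtain ⟨hl0, hξl⟩ := hfar l hl hRl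
    set rr := ‖l‖ with hrr
    have hr1 : 1 ≤ rr := by linarith
    have hr0 : (0:ℝ) < rr := by linarith
    have hbpos : 0 < ‖ξ + l‖ := norm_pos_iff.mpr hξl
    have hb : rr - a ≤ ‖ξ + l‖ := by
      have h1 : ‖(ξ + l) + (-ξ)‖ ≤ ‖ξ + l‖ + ‖-ξ‖ :=
        norm_add_le _ _
      rw [show (ξ + l) + (-ξ) = l by ring, norm_neg] at h1
      linarith
    have hrepr : (ξ + l)⁻¹ - l⁻¹ + ξ * (l ^ 2)⁻¹ = ξ ^ 2 / ((ξ + l) * l ^ 2) := by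
      field_simp
      ring
    rw [hrepr, norm_div, norm_pow, norm_mul, norm_pow, ← ha, ← hrr]
    apply aux_div _ _ _ rr hr0 (by positivity)
    calc a ^ 2 * rr ^ 3 ≤ (2 * a ^ 2 + 1) * ((rr - a) * rr ^ 2) := by
          have h't : 0 ≤ rr - 2 * a - 1 := by linarith
          have h5 : a ^ 2 * rr ≤ (2 * a ^ 2 + 1) * (rr - a) := by
            nlinarith [mul_nonneg (mul_nonneg ha0 ha0) h't, sq_nonneg a]
          have h6 := mul_le_mul_of_nonneg_right h5 (sq_nonneg rr)
          nlinarith [h6]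
      _ ≤ (2 * a ^ 2 + 1) * (‖ξ + l‖ * rr ^ 2) := by
          have h0a : 0 ≤ rr - a := by linarith
          gcongr
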